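/- arXiv:2510.17981 — 2 statements merged into one kernel-verified Lean document; each statement's English description precedes it below -/
import Mathlib

section
/- Let G be a graph containing no cycle of length 2ℓ+1, let v be a vertex of G, and let i ∈ {1, ..., ℓ}. Then the subgraph of G induced on N^i(v), the set of vertices at distance exactly i from v, has chromatic number at most 2ℓ-1. -/
open SimpleGraph

open scoped Classical

section AuxiliaryLemmas

variable {V : Type*}




/-- A chosen parent of `u` towards `v`: a neighbor strictly closer to `v`. -/
noncomputable def gpar (G : SimpleGraph V) (v : V) (u : V) : V :=
  if h : ∃ z, G.Adj u z ∧ G.Reachable v z ∧ G.dist v z + 1 = G.dist v u then h.choose else v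

lemma gpar_spec {G : SimpleGraph V} {v u : V} (hr : G.Reachable v u) (hd : G.dist v u ≠ 0) :
    G.Adj u (gpar G v u) ∧ G.Reachable v (gpar G v u) ∧
      G.dist v (gpar G v u) + 1 = G.dist v u := by
  have hex : ∃ z, G.Adj u z ∧ G.Reachable v z ∧ G.dist v z + 1 = G.dist v u := by
    obtain ⟨p, hp⟩ := hr.symm.exists_walk_length_eq_dist
    cases p with
    | nil => simp [SimpleGraph.dist_comm] at hp; simp at hd
    | cons h q =>
      rename_i z
      refine ⟨z, h, ?_, ?_⟩
      · exact (Walk.reachable q).symm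
      · have h1 : G.dist v z ≤ q.length := by
          rw [SimpleGraph.dist_comm]; exact SimpleGraph.dist_le q
        have h2 : G.dist v u ≤ G.dist v z + 1 := by
          obtain ⟨w, hw⟩ := ((Walk.reachable q).symm).exists_walk_length_eq_dist
          have := SimpleGraph.dist_le (w.concat h.symm)
          rwa [Walk.length_concat, hw] at this
        have h3 : q.length + 1 = G.dist v u := by
          rw [SimpleGraph.dist_comm] at hp
          simpa using hp
        omega
  rw [gpar]
  rw [dif_pos hex]
  exact hex.choose_spec

/-- Iterated parent. -/
noncomputable def ganc (G : SimpleGraph V) (v : V) : ℕ → V → V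
  | 0, u => u
  | (k+1), u => gpar G v (ganc G v k u)

lemma ganc_props {G : SimpleGraph V} {v u : V} (hr : G.Reachable v u) :
    ∀ (k : ℕ), k ≤ G.dist v u →
      G.Reachable v (ganc G v k u) ∧ G.dist v (ganc G v k u) = G.dist v u - k
  | 0, _ => ⟨hr, by simp [ganc]⟩
  | (k+1), hk => by
    obtain ⟨h1, h2⟩ := ganc_props hr k (by omega)
    have hd : G.dist v (ganc G v k u) ≠ 0 := by omega
    obtain ⟨ha, hrr, hdd⟩ := gpar_spec h1 hd
    exact ⟨hrr, by simp only [ganc]; omega⟩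

lemma ganc_adj {G : SimpleGraph V} {v u : V} (hr : G.Reachable v u) {k : ℕ}
    (hk : k + 1 ≤ G.dist v u) :
    G.Adj (ganc G v k u) (ganc G v (k+1) u) := by
  obtain ⟨h1, h2⟩ := ganc_props hr k (by omega)
  exact (gpar_spec h1 (by omega)).1

lemma ganc_ganc {G : SimpleGraph V} {v u : V} (a b : ℕ) :
    ganc G v a (ganc G v b u) = ganc G v (a + b) u := by
  induction a with
  | zero => simp [ganc]
  | succ n ih =>
    have : n + 1 + b = (n + b) + 1 := by omega
    rw [this]
    simp only [ganc, ih]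

lemma ganc_eq_of_eq {G : SimpleGraph V} {v x y : V} {k m : ℕ}
    (h : ganc G v k x = ganc G v k y) (hkm : k ≤ m) :
    ganc G v m x = ganc G v m y := by
  obtain ⟨d, rfl⟩ : ∃ d, m = d + k := ⟨m - k, by omega⟩
  rw [← ganc_ganc, ← ganc_ganc, h]

lemma ganc_top {G : SimpleGraph V} {v u : V} (hr : G.Reachable v u) {k : ℕ}
    (hd : G.dist v u = k) : ganc G v k u = v := by
  obtain ⟨h1, h2⟩ := ganc_props hr k (by omega)
  have : G.dist v (ganc G v k u) = 0 := by omega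
  exact (h1.dist_eq_zero_iff.mp this).symm
-- appended to a.lean for testing
lemma exists_downWalk {G : SimpleGraph V} {v u : V} (hr : G.Reachable v u) :
    ∀ (k : ℕ), k ≤ G.dist v u →
    ∃ w : G.Walk (ganc G v k u) u, w.length = k ∧ w.IsPath ∧
      (∀ z, z ∈ w.support ↔ ∃ m, m ≤ k ∧ z = ganc G v m u) ∧
      (∀ e ∈ w.edges, ∃ m, m < k ∧ e = s(ganc G v (m+1) u, ganc G v m u))
  | 0, _ => by
    show ∃ w : G.Walk u u, w.length = 0 ∧ w.IsPath ∧ (∀ z, z ∈ w.support ↔ ∃ m, m ≤ 0 ∧ z = ganc G v m u) ∧ (∀ e ∈ w.edges, ∃ m, m < 0 ∧ e = s(ganc G v (m+1) u, ganc G v m u))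
    refine ⟨Walk.nil, rfl, Walk.IsPath.nil, ?_, by simp⟩
    intro z
    simp only [Walk.support_nil, List.mem_singleton]
    constructor
    · rintro rfl; exact ⟨0, le_rfl, rfl⟩
    · rintro ⟨m, hm, rfl⟩
      interval_cases m
      rfl
  | (k+1), hk => by
    obtain ⟨w, hlen, hpath, hsupp, hedges⟩ := exists_downWalk hr k (by omega)
    have hadj : G.Adj (ganc G v (k+1) u) (ganc G v k u) := (ganc_adj hr hk).symm
    have hdm : ∀ m, m ≤ G.dist v u → G.dist v (ganc G v m u) = G.dist v u - m :=
      fun m hm => (ganc_props hr m hm).2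
    refine ⟨Walk.cons hadj w, by simp [hlen], ?_, ?_, ?_⟩
    · rw [Walk.cons_isPath_iff]
      refine ⟨hpath, fun hmem => ?_⟩
      obtain ⟨m, hm, heq⟩ := (hsupp _).mp hmem
      have d1 := hdm (k+1) hk
      have d2 := hdm m (by omega)
      rw [← heq] at d2
      omega
    · intro z
      simp only [Walk.support_cons, List.mem_cons, hsupp]
      constructor
      · rintro (rfl | ⟨m, hm, rfl⟩)
        · exact ⟨k+1, le_rfl, rfl⟩
        · exact ⟨m, by omega, rfl⟩
      · rintro ⟨m, hm, rfl⟩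
        rcases Nat.lt_or_ge m (k+1) with h | h
        · exact Or.inr ⟨m, by omega, rfl⟩
        · left; congr 1; omega
    · intro e he
      simp only [Walk.edges_cons, List.mem_cons] at he
      rcases he with rfl | he
      · exact ⟨k, by omega, rfl⟩
      · obtain ⟨m, hm, rfl⟩ := hedges e he
        exact ⟨m, by omega, rfl⟩

lemma greedy_path {G : SimpleGraph V} {S : Finset V} {D : ℕ}
    (hdeg : ∀ x ∈ S, D ≤ (S.filter (G.Adj x)).card) :
    ∀ (m : ℕ) (A : Finset V) (x : V), x ∈ S → x ∉ A → m + A.card ≤ D →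
    ∃ (e : V) (p : G.Walk x e), p.IsPath ∧ p.length = m ∧
      (∀ z ∈ p.support, z ∈ S ∧ z ∉ A)
  | 0, A, x, hx, hxA, _ => by
    exact ⟨x, Walk.nil, Walk.IsPath.nil, rfl, by simp [hx, hxA]⟩
  | (m+1), A, x, hx, hxA, hm => by
    classical
    obtain ⟨e, p, hpath, hlen, hsup⟩ := greedy_path hdeg m A x hx hxA (by omega)
    have heS : e ∈ S := (hsup e p.end_mem_support).1
    set B : Finset V := (A ∪ p.support.toFinset).erase e with hB
    have hBcard : B.card ≤ A.card + m := by
      have h1 : (A ∪ p.support.toFinset).card ≤ A.card + (m + 1) := by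
        calc (A ∪ p.support.toFinset).card ≤ A.card + p.support.toFinset.card :=
              Finset.card_union_le _ _
        _ ≤ A.card + p.support.length := by
              gcongr; exact p.support.toFinset_card_le
        _ = A.card + (m + 1) := by rw [Walk.length_support, hlen]
      have h2 : e ∈ A ∪ p.support.toFinset := by
        simp [Finset.mem_union, List.mem_toFinset, p.end_mem_support]
      rw [hB, Finset.card_erase_of_mem h2]
      omega
    have hne : ((S.filter (G.Adj e)) \ B).Nonempty := by
      rw [← Finset.card_pos]
      have h3 : D ≤ (S.filter (G.Adj e)).card := hdeg e heS
      have h4 := Finset.card_le_card (Finset.sdiff_subset (s := S.filter (G.Adj e)) (t := B))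
      have h5 : (S.filter (G.Adj e)).card ≤ ((S.filter (G.Adj e)) \ B).card + B.card :=
        Finset.card_le_card_sdiff_add_card
      omega
    obtain ⟨z, hz⟩ := hne
    rw [Finset.mem_sdiff, Finset.mem_filter] at hz
    obtain ⟨⟨hzS, hadj⟩, hzB⟩ := hz
    have hze : z ≠ e := fun h => G.irrefl (h ▸ hadj)
    have hzA : z ∉ A ∧ z ∉ p.support := by
      rw [hB, Finset.mem_erase] at hzB
      push_neg at hzB
      have := hzB hze
      simp only [Finset.mem_union, List.mem_toFinset] at this
      push_neg at this
      exact this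
    refine ⟨z, p.concat hadj, ?_, ?_, ?_⟩
    · rw [Walk.isPath_def, Walk.support_concat, List.nodup_append]
      exact ⟨hpath.support_nodup, List.nodup_singleton z,
        by intro a ha b hb; simp only [List.mem_singleton] at hb; rintro rfl; exact hzA.2 (hb ▸ ha)⟩
    · simp [Walk.length_concat, hlen]
    · intro w hw
      rw [Walk.support_concat, List.mem_append] at hw
      rcases hw with hw | hw
      · exact hsup w hw
      · simp only [List.mem_singleton] at hw
        exact hw ▸ ⟨hzS, hzA.1⟩
lemma cycle_of_cross_path {G : SimpleGraph V} {v : V} {i : ℕ} (hi : 1 ≤ i) {x y : V}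
    (hrx : G.Reachable v x) (hdx : G.dist v x = i)
    (hry : G.Reachable v y) (hdy : G.dist v y = i)
    (hne : ganc G v (i-1) x ≠ ganc G v (i-1) y)
    (p : G.Walk x y) (hp : p.IsPath)
    (hlay : ∀ z ∈ p.support, G.Reachable v z ∧ G.dist v z = i) :
    ∃ C : G.Walk v v, C.IsCycle ∧ C.length = p.length + 2*i := by
  obtain ⟨w1, hw1len, hw1path, hw1supp, hw1edges⟩ := exists_downWalk hrx (i-1) (by omega)
  obtain ⟨w2, hw2len, hw2path, hw2supp, hw2edges⟩ := exists_downWalk hry i (by omega)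
  have hvy : ganc G v i y = v := ganc_top hry hdy
  have hvx : ganc G v i x = v := ganc_top hrx hdx
  have hdax : ∀ m, m ≤ i → G.dist v (ganc G v m x) = i - m := by
    intro m hm
    have := (ganc_props hrx m (by omega)).2
    rw [hdx] at this; exact this
  have hday : ∀ m, m ≤ i → G.dist v (ganc G v m y) = i - m := by
    intro m hm
    have := (ganc_props hry m (by omega)).2
    rw [hdy] at this; exact this
  let w2c : G.Walk v y := w2.copy hvy rfl
  have hadj : G.Adj v (ganc G v (i-1) x) := by
    have h1 : (i-1) + 1 ≤ G.dist v x := by omega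
    have := ganc_adj hrx h1
    have e1 : i - 1 + 1 = i := by omega
    rw [e1, hvx] at this
    exact this.symm
  -- facts about supports
  have hxtail : x ∉ p.support.tail ∧ p.support.tail.Nodup := by
    have := hp.support_nodup
    rw [Walk.support_eq_cons] at this
    exact List.nodup_cons.mp this
  have hw2rev : (w2c.reverse).IsPath := by
    apply Walk.IsPath.reverse
    simpa [w2c] using hw2path
  have hytail : y ∉ (w2c.reverse).support.tail ∧ (w2c.reverse).support.tail.Nodup := by
    have := hw2rev.support_nodup
    rw [Walk.support_eq_cons] at this
    exact List.nodup_cons.mp this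
  have hmem2 : ∀ z ∈ (w2c.reverse).support.tail, ∃ m, 1 ≤ m ∧ m ≤ i ∧ z = ganc G v m y := by
    intro z hz
    have hzy : z ≠ y := fun h => hytail.1 (h ▸ hz)
    have : z ∈ (w2c.reverse).support := List.mem_of_mem_tail hz
    rw [Walk.support_reverse, List.mem_reverse, Walk.support_copy] at this
    obtain ⟨m, hm, rfl⟩ := (hw2supp z).mp this
    refine ⟨m, ?_, hm, rfl⟩
    rcases Nat.eq_zero_or_pos m with rfl | h
    · simp [ganc] at hzy
    · omega
  have hmemtail : ∀ z ∈ p.support.tail, G.Reachable v z ∧ G.dist v z = i :=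
    fun z hz => hlay z (List.mem_of_mem_tail hz)
  -- the cycle
  refine ⟨Walk.cons hadj (w1.append (p.append w2c.reverse)), ?_, ?_⟩
  · rw [Walk.cons_isCycle_iff]
    constructor
    · -- IsPath of rest
      rw [Walk.isPath_def, Walk.support_append, Walk.tail_support_append, List.nodup_append]
      refine ⟨hw1path.support_nodup, ?_, ?_⟩
      · rw [List.nodup_append]
        refine ⟨hxtail.2, hytail.2, ?_⟩
        intro a ha b hb hab; rw [← hab] at hb
        have h1 := (hmemtail a ha).2
        obtain ⟨m, hm1, hm2, rfl⟩ := hmem2 a hb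
        have := hday m hm2
        omega
      · intro a ha b hmem hab; rw [← hab] at hmem
        obtain ⟨m, hm, rfl⟩ := (hw1supp a).mp ha
        rw [List.mem_append] at hmem
        rcases hmem with hb | hb
        · rcases Nat.eq_zero_or_pos m with rfl | hmpos
          · simp only [ganc] at hb
            exact hxtail.1 hb
          · have h1 := (hmemtail _ hb).2
            have h2 := hdax m (by omega)
            omega
        · obtain ⟨m', hm'1, hm'2, heq⟩ := hmem2 _ hb
          have d1 := hdax m (by omega)
          have d2 := hday m' hm'2
          rw [heq] at d1
          have hmm : m = m' := by omega
          subst hmm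
          have : ganc G v (i-1) x = ganc G v (i-1) y :=
            ganc_eq_of_eq heq (by omega)
          exact hne this
    · -- edge not in rest
      intro hE
      rw [Walk.edges_append, Walk.edges_append, List.mem_append, List.mem_append] at hE
      rcases hE with h1 | h2 | h3
      · obtain ⟨m, hm, heq⟩ := hw1edges _ h1
        rw [Sym2.eq_iff] at heq
        rcases heq with ⟨hv1, _⟩ | ⟨hv1, _⟩
        · have := hdax (m+1) (by omega)
          rw [← hv1] at this
          rw [SimpleGraph.dist_self] at this
          omega
        · have := hdax m (by omega)
          rw [← hv1] at this
          rw [SimpleGraph.dist_self] at this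
          omega
      · have hvmem := Walk.fst_mem_support_of_mem_edges p h2
        have := (hlay v hvmem).2
        rw [SimpleGraph.dist_self] at this
        omega
      · rw [Walk.edges_reverse, List.mem_reverse, Walk.edges_copy] at h3
        obtain ⟨m, hm, heq⟩ := hw2edges _ h3
        rw [Sym2.eq_iff] at heq
        rcases heq with ⟨hv1, hv2⟩ | ⟨hv1, hv2⟩
        · have := hday (m+1) (by omega)
          rw [← hv1] at this
          rw [SimpleGraph.dist_self] at this
          have hmi : m = i - 1 := by omega
          subst hmi
          exact hne (by rw [hv2])
        · have := hday m (by omega)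
          rw [← hv1] at this
          rw [SimpleGraph.dist_self] at this
          omega
  · simp only [w2c, Walk.length_cons, Walk.length_append, Walk.length_reverse,
      Walk.length_copy, hw1len, hw2len]
    omega
lemma pin_lemma {G : SimpleGraph V} {S : Finset V} {D t : ℕ} {π : V → V}
    (hdeg : ∀ x ∈ S, D ≤ (S.filter (G.Adj x)).card)
    (hts : t + 1 ≤ D) (ht : 1 ≤ t)
    (NoCross : ∀ (a b : V) (p : G.Walk a b), p.IsPath → (∀ z ∈ p.support, z ∈ S) →
      p.length = t → π a = π b)
    {u w z : V} (hu : u ∈ S) (hw : w ∈ S) (hz : z ∈ S)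
    (huw : G.Adj u w) (hwz : G.Adj w z) (hne : u ≠ z) : π u = π z := by
  classical
  have hwu : w ∉ ({u, z} : Finset V) := by
    simp only [Finset.mem_insert, Finset.mem_singleton]
    push_neg
    exact ⟨(G.ne_of_adj huw).symm, G.ne_of_adj hwz⟩
  have hcard : ({u, z} : Finset V).card ≤ 2 := Finset.card_insert_le _ _ |>.trans (by simp)
  obtain ⟨e, q, hqpath, hqlen, hqsup⟩ :=
    greedy_path hdeg (t-1) {u, z} w hw hwu (by omega)
  have huq : u ∉ q.support := by
    intro h
    exact absurd (by simp : u ∈ ({u, z} : Finset V)) (hqsup u h).2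
  have hzq : z ∉ q.support := by
    intro h
    exact absurd (by simp : z ∈ ({u, z} : Finset V)) (hqsup z h).2
  have h1 : π u = π e := by
    refine NoCross u e (Walk.cons huw q) ((Walk.cons_isPath_iff _ _).mpr ⟨hqpath, huq⟩) ?_ ?_
    · intro a ha
      rw [Walk.support_cons, List.mem_cons] at ha
      rcases ha with rfl | ha
      · exact hu
      · exact (hqsup a ha).1
    · simp only [Walk.length_cons, hqlen]; omega
  have h2 : π z = π e := by
    refine NoCross z e (Walk.cons hwz.symm q) ((Walk.cons_isPath_iff _ _).mpr ⟨hqpath, hzq⟩) ?_ ?_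
    · intro a ha
      rw [Walk.support_cons, List.mem_cons] at ha
      rcases ha with rfl | ha
      · exact hz
      · exact (hqsup a ha).1
    · simp only [Walk.length_cons, hqlen]; omega
  rw [h1, h2]

lemma chain_lemma {G : SimpleGraph V} {S : Finset V} {D t : ℕ} {π : V → V}
    (hdeg : ∀ x ∈ S, D ≤ (S.filter (G.Adj x)).card)
    (hts : t + 1 ≤ D) (ht : 1 ≤ t)
    (NoCross : ∀ (a b : V) (p : G.Walk a b), p.IsPath → (∀ z ∈ p.support, z ∈ S) →
      p.length = t → π a = π b) :
    ∀ {a b : V} (q : G.Walk a b), q.IsPath → (∀ z ∈ q.support, z ∈ S) →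
      (Odd q.length → ∀ c, c ∈ S → G.Adj c a → c ∉ q.support → π b = π c) ∧
      (Even q.length → π b = π a) := by
  intro a b q
  induction q with
  | nil =>
    intro _ _
    refine ⟨?_, fun _ => rfl⟩
    intro hodd
    simp only [Walk.length_nil] at hodd
    exact absurd hodd (by simp [Nat.odd_iff])
  | @cons a a₁ b h q' ih =>
    intro hpath hsup
    rw [Walk.cons_isPath_iff] at hpath
    have hsup' : ∀ z ∈ q'.support, z ∈ S := fun z hz =>
      hsup z (by rw [Walk.support_cons]; exact List.mem_cons_of_mem _ hz)
    have haS : a ∈ S := hsup a (by rw [Walk.support_cons]; exact List.mem_cons_self)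
    have ha₁S : a₁ ∈ S := hsup' a₁ q'.start_mem_support
    obtain ⟨ih1, ih2⟩ := ih hpath.1 hsup'
    constructor
    · intro hodd c hcS hca hcsup
      have heven : Even q'.length := by
        rw [Walk.length_cons] at hodd
        rcases Nat.even_or_odd q'.length with h | h
        · exact h
        · exact absurd hodd (by simp [Nat.odd_add_one, ← Nat.not_even_iff_odd, h])
      have hba₁ : π b = π a₁ := ih2 heven
      have hca₁ : c ≠ a₁ := by
        intro hc
        exact hcsup (by rw [hc, Walk.support_cons]; exact List.mem_cons_of_mem _ q'.start_mem_support)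
      have := pin_lemma hdeg hts ht NoCross hcS haS ha₁S hca h hca₁
      rw [hba₁, ← this]
    · intro heven
      rw [Walk.length_cons] at heven
      have hodd' : Odd q'.length := by
        rcases Nat.even_or_odd q'.length with h | h
        · exfalso
          rw [Nat.even_add_one] at heven
          exact heven (by exact h)
        · exact h
      exact ih1 hodd' a haS h hpath.2
lemma noCore {G : SimpleGraph V} {ℓ : ℕ} (hℓ : 1 ≤ ℓ)
    (hcyc : ∀ (v : V) (p : G.Walk v v), p.IsCycle → p.length ≠ 2 * ℓ + 1) :
    ∀ (i : ℕ), 1 ≤ i → i ≤ ℓ → ∀ (v : V) (S : Finset V),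
    (∀ x ∈ S, G.Reachable v x ∧ G.dist v x = i) →
    (∀ x ∈ S, 2*ℓ-1 ≤ (S.filter (G.Adj x)).card) → S = ∅ := by
  intro i
  induction i with
  | zero => omega
  | succ n ih =>
    intro h1 hle v S hlayer hdeg
    classical
    by_contra hS
    obtain ⟨x₀, hx₀⟩ := Finset.nonempty_of_ne_empty hS
    set i := n + 1 with hi
    set t : ℕ := 2*ℓ+1 - 2*i with hT
    set D : ℕ := 2*ℓ-1 with hD
    set π : V → V := fun u => ganc G v n u with hπ
    have htD : t ≤ D := by omega
    have ht1 : 1 ≤ t := by omega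
    -- Subcase: crossing t-path exists → cycle of length 2ℓ+1
    by_cases hcp : ∃ (x y : V) (p : G.Walk x y), p.IsPath ∧ (∀ z ∈ p.support, z ∈ S) ∧
        p.length = t ∧ π x ≠ π y
    · obtain ⟨x, y, p, hpath, hsup, hplen, hπne⟩ := hcp
      have hxS : x ∈ S := hsup x p.start_mem_support
      have hyS : y ∈ S := hsup y p.end_mem_support
      have hlayp : ∀ z ∈ p.support, G.Reachable v z ∧ G.dist v z = i :=
        fun z hz => hlayer z (hsup z hz)
      have hnn : i - 1 = n := by omega
      obtain ⟨C, hC, hClen⟩ := cycle_of_cross_path (by omega : 1 ≤ i)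
        (hlayer x hxS).1 (hlayer x hxS).2 (hlayer y hyS).1 (hlayer y hyS).2
        (by rw [hnn]; exact hπne) p hpath hlayp
      exact hcyc v C hC (by omega)
    · push_neg at hcp
      have NoCross : ∀ (a b : V) (p : G.Walk a b), p.IsPath → (∀ z ∈ p.support, z ∈ S) →
          p.length = t → π a = π b := by
        intro a b p h1' h2' h3'
        exact hcp a b p h1' h2' h3'
      rcases Nat.lt_or_ge n 1 with hn0 | hn1
      · -- i = 1 : greedy t-path has distinct endpoints, but π = id
        have hn : n = 0 := by omega
        obtain ⟨e, q, hqpath, hqlen, hqsup⟩ :=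
          greedy_path hdeg t ∅ x₀ hx₀ (by simp) (by simp; omega)
        rcases eq_or_ne x₀ e with rfl | hne
        · rw [Walk.isPath_iff_eq_nil] at hqpath
          rw [hqpath] at hqlen
          simp at hqlen
          omega
        · have := NoCross x₀ e q hqpath (fun z hz => (hqsup z hz).1) hqlen
          rw [hπ, hn] at this
          simp only [ganc] at this
          exact hne this
      · -- i ≥ 2
        by_cases hedge : ∃ x ∈ S, ∃ y ∈ S, G.Adj x y ∧ π x ≠ π y
        · obtain ⟨x, hxS, y, hyS, hadj, hπne⟩ := hedge
          have hts : t + 1 ≤ D := by omega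
          have hxy : x ∉ ({y} : Finset V) := by
            simp only [Finset.mem_singleton]
            exact fun h => G.irrefl (h ▸ hadj)
          obtain ⟨e, q, hqpath, hqlen, hqsup⟩ :=
            greedy_path hdeg t {y} x hxS hxy (by simp; omega)
          have hysup : y ∉ q.support := by
            intro h
            exact absurd (by simp : y ∈ ({y} : Finset V)) (hqsup y h).2
          have hodd : Odd q.length := by
            rw [hqlen, Nat.odd_iff]
            omega
          have hchain := (chain_lemma hdeg hts ht1 NoCross q hqpath
            (fun z hz => (hqsup z hz).1)).1 hodd y hyS hadj.symm hysup
          have := NoCross x e q hqpath (fun z hz => (hqsup z hz).1) hqlen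
          rw [this, hchain] at hπne
          exact hπne rfl
        · push_neg at hedge
          -- all edges inside S respect π; recurse into the common ball
          set c : V := π x₀ with hc
          set S' : Finset V := S.filter (fun z => π z = π x₀) with hS'
          have hx₀' : x₀ ∈ S' := by
            rw [hS', Finset.mem_filter]
            exact ⟨hx₀, rfl⟩
          have hsub : ∀ x ∈ S', x ∈ S ∧ π x = π x₀ := by
            intro x hx
            rw [hS', Finset.mem_filter] at hx
            exact hx
          have hlay' : ∀ x ∈ S', G.Reachable c x ∧ G.dist c x = n := by
            intro x hx
            obtain ⟨hxS, hπx⟩ := hsub x hx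
            obtain ⟨hrx, hdx⟩ := hlayer x hxS
            have hnx : n ≤ G.dist v x := by omega
            obtain ⟨w, hwlen, -, -, -⟩ := exists_downWalk hrx n hnx
            have hreach : G.Reachable (ganc G v n x) x := w.reachable
            have hdvc : G.dist v (ganc G v n x) = 1 := by
              have := (ganc_props hrx n hnx).2
              omega
            have hcx : ganc G v n x = c := hπx
            rw [hcx] at hreach hdvc
            refine ⟨hreach, ?_⟩
            have hub : G.dist c x ≤ n := by
              have := SimpleGraph.dist_le w
              rw [hwlen] at this
              rw [← hcx]
              exact this
            have hvc : G.Adj v c := SimpleGraph.dist_eq_one_iff_adj.mp hdvc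
            obtain ⟨w2, hw2len⟩ := hreach.exists_walk_length_eq_dist
            have hlb := SimpleGraph.dist_le (Walk.cons hvc w2)
            rw [Walk.length_cons, hw2len] at hlb
            omega
          have hdeg' : ∀ x ∈ S', 2*ℓ-1 ≤ (S'.filter (G.Adj x)).card := by
            intro x hx
            obtain ⟨hxS, hπx⟩ := hsub x hx
            refine le_trans (hdeg x hxS) (Finset.card_le_card ?_)
            intro z hz
            rw [Finset.mem_filter] at hz
            rw [Finset.mem_filter, hS', Finset.mem_filter]
            refine ⟨⟨hz.1, ?_⟩, hz.2⟩
            have := hedge x hxS z hz.1 hz.2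
            rw [← this, hπx]
          have := ih (by omega) (by omega) c S' hlay' hdeg'
          rw [this] at hx₀'
          exact absurd hx₀' (Finset.notMem_empty x₀)
lemma finColor {G : SimpleGraph V} {D : ℕ} (hD : 1 ≤ D) {P : Set V}
    (hlow : ∀ T : Finset V, ↑T ⊆ P → T.Nonempty → ∃ x ∈ T, (T.filter (G.Adj x)).card < D) :
    ∀ (T : Finset V), ↑T ⊆ P → ∃ f : V → Fin D, ∀ x ∈ T, ∀ y ∈ T, G.Adj x y → f x ≠ f y := by
  classical
  intro T
  induction T using Finset.strongInduction with
  | _ T ih =>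
    intro hTP
    rcases T.eq_empty_or_nonempty with rfl | hTne
    · exact ⟨fun _ => ⟨0, hD⟩, by simp⟩
    · obtain ⟨x, hxT, hxdeg⟩ := hlow T hTP hTne
      have hss : T.erase x ⊂ T := Finset.erase_ssubset hxT
      obtain ⟨f', hf'⟩ := ih (T.erase x) hss
        (le_trans (Finset.coe_subset.mpr (Finset.erase_subset _ _)) hTP)
      set used : Finset (Fin D) := ((T.erase x).filter (G.Adj x)).image f' with hused
      have hcard : used.card < D := by
        calc used.card ≤ ((T.erase x).filter (G.Adj x)).card := Finset.card_image_le
          _ ≤ (T.filter (G.Adj x)).card :=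
              Finset.card_le_card (Finset.filter_subset_filter _ (Finset.erase_subset _ _))
          _ < D := hxdeg
      have hcompl : 0 < usedᶜ.card := by
        rw [Finset.card_compl, Fintype.card_fin]
        omega
      obtain ⟨c, hc⟩ := Finset.card_pos.mp hcompl
      rw [Finset.mem_compl] at hc
      refine ⟨Function.update f' x c, ?_⟩
      intro a ha b hb hadj
      by_cases hax : a = x
      · by_cases hbx : b = x
        · exact absurd hadj (by rw [hax, hbx]; exact fun h => G.irrefl h)
        · rw [hax, Function.update_self, Function.update_of_ne hbx]
          intro h
          apply hc
          rw [hused, h]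
          refine Finset.mem_image_of_mem f'
            (Finset.mem_filter.mpr ⟨Finset.mem_erase.mpr ⟨hbx, hb⟩, ?_⟩)
          rw [← hax]
          exact hadj
      · by_cases hbx : b = x
        · rw [hbx, Function.update_self, Function.update_of_ne hax]
          intro h
          apply hc
          rw [hused, ← h]
          refine Finset.mem_image_of_mem f'
            (Finset.mem_filter.mpr ⟨Finset.mem_erase.mpr ⟨hax, ha⟩, ?_⟩)
          rw [← hbx]
          exact hadj.symm
        · rw [Function.update_of_ne hax, Function.update_of_ne hbx]
          exact hf' a (Finset.mem_erase.mpr ⟨hax, ha⟩) b (Finset.mem_erase.mpr ⟨hbx, hb⟩) hadj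

end AuxiliaryLemmas

/-- If `G` contains no cycle of length `2ℓ+1`, then for every vertex `v` and every
`i ∈ {1, …, ℓ}`, the subgraph induced on the set of vertices at distance exactly `i`
from `v` has chromatic number at most `2ℓ-1`. -/
theorem chrom_of_distance_layer {V : Type*} (G : SimpleGraph V) (ℓ : ℕ) (hℓ : 1 ≤ ℓ)
    (hcyc : ∀ (v : V) (p : G.Walk v v), p.IsCycle → p.length ≠ 2 * ℓ + 1)
    (v : V) (i : ℕ) (hi : 1 ≤ i) (hiℓ : i ≤ ℓ) :
    (G.induce {u | G.Reachable v u ∧ G.dist v u = i}).chromaticNumber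
      ≤ ((2 * ℓ - 1 : ℕ) : ℕ∞) := by
  classical
  set L : Set V := {u | G.Reachable v u ∧ G.dist v u = i} with hL
  set D : ℕ := 2 * ℓ - 1 with hD
  have hD1 : 1 ≤ D := by omega
  have hlow : ∀ T : Finset V, ↑T ⊆ L → T.Nonempty →
      ∃ x ∈ T, (T.filter (G.Adj x)).card < D := by
    intro T hTP hTne
    by_contra hcon
    push_neg at hcon
    have hlayer : ∀ x ∈ T, G.Reachable v x ∧ G.dist v x = i := by
      intro x hx
      exact hTP hx
    have := noCore hℓ hcyc i hi hiℓ v T hlayer hcon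
    rw [this] at hTne
    exact absurd hTne Finset.not_nonempty_empty
  have hcol : (G.induce L).Colorable D := by
    have hF : ∀ G' : (G.induce L).Subgraph, G'.verts.Finite →
        (G'.coe →g (⊤ : SimpleGraph (Fin D))) := by
      intro G' hfin
      have hfin' : (Subtype.val '' G'.verts : Set V).Finite := hfin.image _
      set T : Finset V := hfin'.toFinset with hT
      have hTP : ↑T ⊆ L := by
        intro u hu
        rw [hT, Set.Finite.coe_toFinset] at hu
        obtain ⟨x, _, rfl⟩ := hu
        exact x.2
      have hfex := finColor hD1 hlow T hTP
      set f : V → Fin D := Classical.choose hfex with hfdef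
      have hf := Classical.choose_spec hfex
      refine ⟨fun a => f a.val.val, ?_⟩
      intro a b hab
      have hadj : (G.induce L).Adj a.val b.val := G'.adj_sub hab
      have hGadj : G.Adj a.val.val b.val.val := by
        simpa using hadj
      have haT : (a.val.val : V) ∈ T := by
        rw [hT, Set.Finite.mem_toFinset]
        exact ⟨a.val, a.2, rfl⟩
      have hbT : (b.val.val : V) ∈ T := by
        rw [hT, Set.Finite.mem_toFinset]
        exact ⟨b.val, b.2, rfl⟩
      have := hf _ haT _ hbT hGadj
      simpa using this
    obtain ⟨h⟩ := nonempty_hom_of_forall_finite_subgraph_hom hF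
    exact ⟨h⟩
  exact hcol.chromaticNumber_le
end

section
/- Let G be a graph with no odd cycle of length at most 2ℓ+1, and let v be a vertex of G. Then the subgraph of G induced on the set of vertices at distance at most ℓ from v is bipartite. -/
open SimpleGraph

private lemma length_rotate' {V : Type*} [DecidableEq V] {G : SimpleGraph V} {v u : V} (c : G.Walk v v)
    (h : u ∈ c.support) : (c.rotate u h).length = c.length := by
  have := congrArg SimpleGraph.Walk.length (c.take_spec h)
  rw [SimpleGraph.Walk.length_append] at this
  simp only [SimpleGraph.Walk.rotate, SimpleGraph.Walk.length_append]
  omega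

/-- An odd closed walk contains an odd cycle of no greater length. -/
private lemma odd_cycle_of_odd_closed_walk {V : Type*} [DecidableEq V] {G : SimpleGraph V} :
    ∀ (n : ℕ) (u : V) (p : G.Walk u u), p.length = n → Odd n →
      ∃ (w : V) (c : G.Walk w w), c.IsCycle ∧ Odd c.length ∧ c.length ≤ n := by
  intro n
  induction n using Nat.strong_induction_on with
  | _ n ih =>
  intro u p hlen hodd
  by_cases hnodup : p.support.tail.Nodup
  · -- p has no repeated vertices except the endpoints; show it is a cycle
    -- first, p is not nil
    have hne : p.length ≠ 0 := by
      rw [hlen]; rintro rfl; exact (Nat.not_odd_iff_even.2 Even.zero) hodd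
    cases p with
    | nil => simp at hne
    | @cons _ w _ h q =>
      have hq : q.support.Nodup := by simpa using hnodup
      have hqpath : q.IsPath := by rw [SimpleGraph.Walk.isPath_def]; exact hq
      have hedge : s(u, w) ∉ q.edges := by
        intro hmem
        cases q with
        | nil => exact h.ne rfl
        | @cons _ y _ h' q' =>
          rw [SimpleGraph.Walk.edges_cons, List.mem_cons] at hmem
          rcases hmem with heq | hmem
          · -- s(u,w) = s(w,y)
            rw [Sym2.eq_iff] at heq
            rcases heq with ⟨rfl, rfl⟩ | ⟨rfl, -⟩
            · exact h.ne rfl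
            · -- q' : Walk u u is a path, so nil, but then p has length 2, contradicting odd
              have hq' : q'.IsPath := by
                rw [SimpleGraph.Walk.isPath_def]
                simpa using hq.of_cons
              rw [SimpleGraph.Walk.isPath_iff_eq_nil] at hq'
              subst hq'
              simp only [SimpleGraph.Walk.length_cons, SimpleGraph.Walk.length_nil] at hlen
              rw [← hlen] at hodd
              exact (Nat.not_odd_iff_even.2 (by decide)) hodd
          · have : w ∈ q'.support := SimpleGraph.Walk.fst_mem_support_of_mem_edges q'
              (by rwa [Sym2.eq_swap] at hmem)
            rw [SimpleGraph.Walk.support_cons] at hq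
            exact (List.nodup_cons.1 hq).1 this
      have hcyc : (SimpleGraph.Walk.cons h q).IsCycle :=
        (SimpleGraph.Walk.cons_isCycle_iff q h).2 ⟨hqpath, hedge⟩
      exact ⟨u, SimpleGraph.Walk.cons h q, hcyc, hlen ▸ hodd, le_of_eq hlen⟩
  · -- there is a repeated internal vertex; split the walk
    obtain ⟨x, hx⟩ : ∃ x, 2 ≤ p.support.tail.count x := by
      by_contra hcon
      push_neg at hcon
      exact hnodup (List.nodup_iff_count_le_one.2 fun a => by
        have := hcon a; omega)
    have hxs : x ∈ p.support := by
      have : x ∈ p.support.tail := List.count_pos_iff.1 (by omega)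
      exact List.mem_of_mem_tail this
    set r := p.rotate x hxs with hr
    have hrlen : r.length = n := by rw [hr, length_rotate', hlen]
    have hrc : 2 ≤ r.support.tail.count x := by
      have hperm : List.Perm r.support.tail p.support.tail :=
        (SimpleGraph.Walk.support_rotate p x hxs).perm
      rwa [hperm.count_eq]
    cases hrn : r with
    | nil =>
      exfalso
      rw [hrn] at hrlen
      simp only [SimpleGraph.Walk.length_nil] at hrlen
      rw [← hrlen] at hodd
      exact (Nat.not_odd_iff_even.2 Even.zero) hodd
    | @cons _ y _ h t =>
      rw [hrn] at hrlen hrc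
      have htc : 2 ≤ t.support.count x := by
        rwa [SimpleGraph.Walk.support_cons, List.tail_cons] at hrc
      have hxt : x ∈ t.support := List.count_pos_iff.1 (by omega)
      set t1 := t.takeUntil x hxt with ht1
      set t2 := t.dropUntil x hxt with ht2
      have hspec : t1.append t2 = t := SimpleGraph.Walk.take_spec t hxt
      have hlensplit : t1.length + t2.length = t.length := by
        have := congrArg SimpleGraph.Walk.length hspec
        rwa [SimpleGraph.Walk.length_append] at this
      have ht1c : t1.support.count x = 1 :=
        SimpleGraph.Walk.count_support_takeUntil_eq_one t hxt
      have ht2c : 1 ≤ t2.support.tail.count x := by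
        have := congrArg (List.count x) (congrArg SimpleGraph.Walk.support hspec)
        rw [SimpleGraph.Walk.support_append, List.count_append, ht1c] at this
        omega
      have ht2len : 1 ≤ t2.length := by
        have h1 : t2.support.tail.count x ≤ t2.support.tail.length := List.count_le_length ..
        have h2 : t2.support.length = t2.length + 1 := SimpleGraph.Walk.length_support t2
        have h3 : t2.support.tail.length = t2.support.length - 1 := List.length_tail
        omega
      have htlen : t.length + 1 = n := by
        have := hrlen
        rw [SimpleGraph.Walk.length_cons] at this
        omega
      -- two closed walks at x : cons h t1 and t2
      have hsum : (SimpleGraph.Walk.cons h t1).length + t2.length = n := by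
        rw [SimpleGraph.Walk.length_cons]; omega
      by_cases h1 : Odd (SimpleGraph.Walk.cons h t1).length
      · have hlt : (SimpleGraph.Walk.cons h t1).length < n := by omega
        obtain ⟨w, c, hc, hco, hcl⟩ := ih _ hlt x (SimpleGraph.Walk.cons h t1) rfl h1
        exact ⟨w, c, hc, hco, hcl.trans hlt.le⟩
      · have h2 : Odd t2.length := by
          rw [Nat.not_odd_iff_even] at h1
          rcases Nat.even_or_odd t2.length with he | ho
          · exfalso
            have : Even n := by rw [← hsum]; exact h1.add he
            exact (Nat.not_odd_iff_even.2 this) hodd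
          · exact ho
        have hlt : t2.length < n := by
          have : 1 ≤ (SimpleGraph.Walk.cons h t1).length := by
            rw [SimpleGraph.Walk.length_cons]; omega
          omega
        obtain ⟨w, c, hc, hco, hcl⟩ := ih _ hlt x t2 rfl h2
        exact ⟨w, c, hc, hco, hcl.trans hlt.le⟩

/-- If `G` has no odd cycle of length at most `2ℓ+1`, then the subgraph induced on the
set of vertices at distance at most `ℓ` from `v` is bipartite (2-colourable). -/
theorem ball_bipartite {V : Type*} (G : SimpleGraph V) (ℓ : ℕ) (hℓ : 1 ≤ ℓ)
    (hcyc : ∀ (u : V) (p : G.Walk u u), p.IsCycle → Odd p.length → 2 * ℓ + 1 < p.length)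
    (v : V) :
    (G.induce {u | ∃ p : G.Walk v u, p.length ≤ ℓ}).Colorable 2 := by
  classical
  refine ⟨SimpleGraph.Coloring.mk (fun u => ⟨G.dist v u.val % 2, Nat.mod_lt _ two_pos⟩) ?_⟩
  rintro ⟨a, pa, hpa⟩ ⟨b, pb, hpb⟩ hab hcol
  simp only [comap_adj, Function.Embedding.coe_subtype] at hab
  have hab' : G.Adj a b := hab
  simp only [Fin.mk.injEq] at hcol
  -- distances
  have hra : G.Reachable v a := ⟨pa⟩
  have hrb : G.Reachable v b := ⟨pb⟩
  obtain ⟨qa, hqa⟩ := hra.exists_walk_length_eq_dist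
  obtain ⟨qb, hqb⟩ := hrb.exists_walk_length_eq_dist
  have hda : G.dist v a ≤ ℓ := (G.dist_le pa).trans hpa
  have hdb : G.dist v b ≤ ℓ := (G.dist_le pb).trans hpb
  -- odd closed walk
  set W := qa.append (SimpleGraph.Walk.cons hab' qb.reverse) with hW
  have hWlen : W.length = G.dist v a + G.dist v b + 1 := by
    rw [hW, SimpleGraph.Walk.length_append, SimpleGraph.Walk.length_cons,
      SimpleGraph.Walk.length_reverse, hqa, hqb]
    omega
  have hWodd : Odd W.length := by
    rw [hWlen]
    rcases Nat.even_or_odd (G.dist v a) with he | ho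
    · have : Even (G.dist v b) := by
        rcases Nat.even_or_odd (G.dist v b) with h | h
        · exact h
        · exfalso
          rw [Nat.even_iff] at he; rw [Nat.odd_iff] at h
          omega
      rw [Nat.even_iff] at he this
      rw [Nat.odd_iff]
      omega
    · have : Odd (G.dist v b) := by
        rcases Nat.even_or_odd (G.dist v b) with h | h
        · exfalso
          rw [Nat.odd_iff] at ho; rw [Nat.even_iff] at h
          omega
        · exact h
      rw [Nat.odd_iff] at ho this ⊢
      omega
  obtain ⟨w, c, hc, hco, hcl⟩ := odd_cycle_of_odd_closed_walk W.length v W rfl hWodd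
  have := hcyc w c hc hco
  rw [hWlen] at hcl
  omega
end
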